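/- Let d ≥ 1 and k, q, β ∈ ℕ. Let x ∈ ℝ^{4^d} with x ≠ 0 and every component a k-bit floating-point number (i.e., x_i = σ_i·m_i·2^{t_i} with σ_i ∈ {1,−1}, m_i ∈ ℕ, m_i < 2^k, t_i ∈ ℤ). Let e_max = ⌊log₂‖x‖_∞⌋ and ℓ = e_max − q + 1. Define: (Step 2) z ∈ ℤ^{4^d} by z_i = sgn(x_i)·⌊2^{−ℓ}·|x_i|⌋; (Step 3) w = 𝐿̃_d(z) ∈ ℤ^{4^d}; (Step 8) ŵ_i = ∑_{j > q+1−β} d_i(j)·(−2)^j, where d_i is the negabinary digit function of w_i. Then ‖ŵ − L_d·(2^{−ℓ}·x)‖_∞ ≤ 2^{−ℓ}·( (8/3)·ε_β + ε_q·(1 + (8/3)·ε_β)·(k_L·(1+ε_q) + 1) )·‖x‖_∞, where ε_m = 2^{1−m} and k_L = (7/4)·(2^d − 1). -/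

import Mathlib

/-- Floor division by 2, modeling a one-bit right shift of a two's complement integer. -/
def rr (p : ℤ) : ℤ := ⌊(p : ℚ) / 2⌋

/-- The ZFP forward transform matrix `L`. -/
noncomputable def Lmat : Matrix (Fin 4) (Fin 4) ℝ :=
  (1 / 16 : ℝ) • !![4, 4, 4, 4; 5, 1, -1, -5; -4, 4, 4, -4; -2, 6, -6, 2]

/-- The lossy forward transform `𝐿̃ : ℤ⁴ → ℤ⁴` of ZFP, executed step by step. -/
def Ltilde (a : Fin 4 → ℤ) : Fin 4 → ℤ :=
  let a1 := a 0
  let a2 := a 1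
  let a3 := a 2
  let a4 := a 3
  let a1 := a1 + a4
  let a1 := rr a1
  let a4 := a4 - a1
  let a3 := a3 + a2
  let a3 := rr a3
  let a2 := a2 - a3
  let a1 := a1 + a3
  let a1 := rr a1
  let a3 := a3 - a1
  let a4 := a4 + a2
  let a4 := rr a4
  let a2 := a2 - a4
  let a4 := a4 + rr a2
  let a2 := a2 - rr a4
  ![a1, a2, a3, a4]

/-- The `d`-fold Kronecker power `L_d = L ⊗ ⋯ ⊗ L`, indexed by tuples in `{0,1,2,3}^d`. -/
noncomputable def LmatD (d : ℕ) : Matrix (Fin d → Fin 4) (Fin d → Fin 4) ℝ :=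
  fun v w => ∏ j, Lmat (v j) (w j)

/-- Applying `𝐿̃` along dimension `j`. -/
def applyAlong {d : ℕ} (j : Fin d) (z : (Fin d → Fin 4) → ℤ) : (Fin d → Fin 4) → ℤ :=
  fun v => Ltilde (fun t => z (Function.update v j t)) (v j)

/-- The lossy `d`-dimensional forward transform `𝐿̃_d`: apply `𝐿̃` along dimension 1,
then dimension 2, …, then dimension `d`. -/
def LtildeD {d : ℕ} (z : (Fin d → Fin 4) → ℤ) : (Fin d → Fin 4) → ℤ :=
  (List.finRange d).foldl (fun acc j => applyAlong j acc) z

/-! ### Auxiliary lemmas -/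

lemma rr_eq_ediv (p : ℤ) : rr p = p / 2 := by
  have := Rat.floor_intCast_div_natCast p 2
  simpa [rr] using this

lemma rr_spec (p : ℤ) : ∃ θ : ℝ, 0 ≤ θ ∧ θ ≤ 1/2 ∧ ((rr p : ℤ) : ℝ) = (p:ℝ)/2 - θ := by
  refine ⟨((p % 2 : ℤ):ℝ)/2, ?_, ?_, ?_⟩
  · have : (0:ℤ) ≤ p % 2 := Int.emod_nonneg p (by norm_num)
    positivity
  · have : p % 2 < 2 := Int.emod_lt_of_pos p (by norm_num)
    have : p % 2 ≤ 1 := by omega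
    have : ((p % 2 : ℤ):ℝ) ≤ 1 := by exact_mod_cast this
    linarith
  · have h2 : (2:ℤ) * (p/2) + p % 2 = p := Int.mul_ediv_add_emod p 2
    rw [rr_eq_ediv]
    have h3 : (2:ℝ) * ((p/2 : ℤ):ℝ) + ((p % 2 : ℤ):ℝ) = (p:ℝ) := by exact_mod_cast h2
    linarith

/-- The one-dimensional lossy transform differs from the exact transform by at most `7/4`. -/
lemma ltilde_err (a : Fin 4 → ℤ) (i : Fin 4) :
    |((Ltilde a i : ℤ) : ℝ) - Matrix.mulVec Lmat (fun j => ((a j : ℤ) : ℝ)) i| ≤ 7/4 := by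
  obtain ⟨θ1, t1a, t1b, e1⟩ := rr_spec (a 0 + a 3)
  obtain ⟨θ2, t2a, t2b, e2⟩ := rr_spec (a 2 + a 1)
  obtain ⟨θ3, t3a, t3b, e3⟩ := rr_spec (rr (a 0 + a 3) + rr (a 2 + a 1))
  obtain ⟨θ4, t4a, t4b, e4⟩ := rr_spec ((a 3 - rr (a 0 + a 3)) + (a 1 - rr (a 2 + a 1)))
  obtain ⟨θ5, t5a, t5b, e5⟩ :=
    rr_spec ((a 1 - rr (a 2 + a 1)) - rr ((a 3 - rr (a 0 + a 3)) + (a 1 - rr (a 2 + a 1))))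
  obtain ⟨θ6, t6a, t6b, e6⟩ :=
    rr_spec (rr ((a 3 - rr (a 0 + a 3)) + (a 1 - rr (a 2 + a 1))) +
      rr ((a 1 - rr (a 2 + a 1)) - rr ((a 3 - rr (a 0 + a 3)) + (a 1 - rr (a 2 + a 1)))))
  push_cast at e1 e2 e3 e4 e5 e6
  fin_cases i <;>
    simp [Ltilde, Matrix.mulVec, dotProduct, Lmat, Fin.sum_univ_four] <;>
    push_cast <;>
    rw [abs_le] <;> constructor <;> linarith

lemma lrow_abs (i : Fin 4) : ∑ t, |Lmat i t| ≤ 1 := by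
  fin_cases i <;> simp [Lmat, Fin.sum_univ_four, abs_of_nonneg, abs_of_nonpos] <;>
    norm_num [abs_le]

/-- Applying the exact transform `L` along dimension `j`. -/
noncomputable def stepA {d : ℕ} (j : Fin d) (f : (Fin d → Fin 4) → ℝ) : (Fin d → Fin 4) → ℝ :=
  fun v => ∑ t, Lmat (v j) t * f (Function.update v j t)

/-- Partial Kronecker product matrix: `L` factors on coordinates in `s`, identity elsewhere. -/
noncomputable def Pmat {d : ℕ} (s : Finset (Fin d)) : Matrix (Fin d → Fin 4) (Fin d → Fin 4) ℝ :=
  fun v w => (∏ j ∈ s, Lmat (v j) (w j)) * ∏ j ∈ sᶜ, (if v j = w j then (1:ℝ) else 0)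

lemma pmat_empty {d : ℕ} (f : (Fin d → Fin 4) → ℝ) :
    Matrix.mulVec (Pmat (∅ : Finset (Fin d))) f = f := by
  funext v
  have h : ∀ w, Pmat (∅ : Finset (Fin d)) v w = if v = w then 1 else 0 := by
    intro w
    simp only [Pmat, Finset.prod_empty, one_mul, Finset.compl_empty]
    by_cases h : v = w
    · subst h; simp
    · rw [if_neg h]
      obtain ⟨j, hj⟩ := Function.ne_iff.mp h
      exact Finset.prod_eq_zero (Finset.mem_univ j) (by rw [if_neg hj])
  simp only [Matrix.mulVec, dotProduct, h]
  simp

/-- The involutive reindexing `(w, t) ↦ (update w j t, w j)`. -/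
def swapUpd {d : ℕ} (j : Fin d) : ((Fin d → Fin 4) × Fin 4) ≃ ((Fin d → Fin 4) × Fin 4) where
  toFun p := (Function.update p.1 j p.2, p.1 j)
  invFun p := (Function.update p.1 j p.2, p.1 j)
  left_inv p := by simp
  right_inv p := by simp

lemma pmat_step {d : ℕ} (s : Finset (Fin d)) (j : Fin d) (hj : j ∉ s)
    (f : (Fin d → Fin 4) → ℝ) :
    Matrix.mulVec (Pmat s) (stepA j f) = Matrix.mulVec (Pmat (insert j s)) f := by
  funext v
  have key : ∀ w : Fin d → Fin 4,
      ∑ t, Pmat s v (Function.update w j t) * Lmat t (w j) = Pmat (insert j s) v w := by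
    intro w
    have hprodL : ∀ t, (∏ i ∈ s, Lmat (v i) (Function.update w j t i))
        = ∏ i ∈ s, Lmat (v i) (w i) := by
      intro t
      refine Finset.prod_congr rfl (fun i hi => ?_)
      rw [Function.update_of_ne (fun h => hj (by rw [← h]; exact hi))]
    have hjc : j ∈ sᶜ := Finset.mem_compl.mpr hj
    have hsplit : ∀ t, (∏ i ∈ sᶜ, (if v i = Function.update w j t i then (1:ℝ) else 0))
        = (if v j = t then (1:ℝ) else 0) *
          ∏ i ∈ sᶜ.erase j, (if v i = w i then (1:ℝ) else 0) := by
      intro t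
      rw [← Finset.mul_prod_erase _ _ hjc]
      congr 1
      · simp
      · refine Finset.prod_congr rfl (fun i hi => ?_)
        rw [Function.update_of_ne (Finset.ne_of_mem_erase hi)]
    simp only [Pmat, hprodL, hsplit]
    have : ∀ t : Fin 4, (∏ i ∈ s, Lmat (v i) (w i)) *
        ((if v j = t then (1:ℝ) else 0) * ∏ i ∈ sᶜ.erase j, (if v i = w i then (1:ℝ) else 0)) *
        Lmat t (w j)
        = (if v j = t then ((∏ i ∈ s, Lmat (v i) (w i)) *
            (∏ i ∈ sᶜ.erase j, (if v i = w i then (1:ℝ) else 0)) * Lmat t (w j)) else 0) := by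
      intro t; by_cases h : v j = t <;> simp [h]
    rw [Finset.sum_congr rfl (fun t _ => this t)]
    rw [Finset.sum_ite_eq]
    simp only [Finset.mem_univ, if_true]
    rw [Finset.prod_insert hj, Finset.compl_insert]
    ring
  have hsum : ∀ g : ((Fin d → Fin 4) × Fin 4) → ℝ, ∑ p, g p = ∑ w, ∑ t, g (w, t) :=
    fun g => Fintype.sum_prod_type g
  have hswap : ∀ g : ((Fin d → Fin 4) × Fin 4) → ℝ,
      ∑ p, g p = ∑ p, g (swapUpd j p) := fun g => (Equiv.sum_comp (swapUpd j) g).symm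
  calc Matrix.mulVec (Pmat s) (stepA j f) v
      = ∑ w, ∑ t, Pmat s v w * (Lmat (w j) t * f (Function.update w j t)) := by
        simp [Matrix.mulVec, dotProduct, stepA, Finset.mul_sum]
    _ = ∑ p : (Fin d → Fin 4) × Fin 4, Pmat s v p.1 * (Lmat (p.1 j) p.2 * f (Function.update p.1 j p.2)) :=
        (hsum (fun p => Pmat s v p.1 * (Lmat (p.1 j) p.2 * f (Function.update p.1 j p.2)))).symm
    _ = ∑ p : (Fin d → Fin 4) × Fin 4, Pmat s v (Function.update p.1 j p.2) *
          (Lmat (Function.update p.1 j p.2 j) (p.1 j) *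
            f (Function.update (Function.update p.1 j p.2) j (p.1 j))) :=
        hswap (fun p => Pmat s v p.1 * (Lmat (p.1 j) p.2 * f (Function.update p.1 j p.2)))
    _ = ∑ p : (Fin d → Fin 4) × Fin 4, Pmat s v (Function.update p.1 j p.2) * Lmat p.2 (p.1 j) * f p.1 := by
        refine Finset.sum_congr rfl (fun p _ => ?_)
        have h1 : Function.update p.1 j p.2 j = p.2 := by simp
        have h2 : Function.update (Function.update p.1 j p.2) j (p.1 j) = p.1 := by simp
        rw [h1, h2]; ring
    _ = ∑ w, ∑ t, Pmat s v (Function.update w j t) * Lmat t (w j) * f w :=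
        hsum (fun p => Pmat s v (Function.update p.1 j p.2) * Lmat p.2 (p.1 j) * f p.1)
    _ = ∑ w, (∑ t, Pmat s v (Function.update w j t) * Lmat t (w j)) * f w := by
        simp [Finset.sum_mul]
    _ = Matrix.mulVec (Pmat (insert j s)) f v := by
        simp [Matrix.mulVec, dotProduct, key]

lemma foldl_stepA_eq_pmat {d : ℕ} :
    ∀ (l : List (Fin d)), l.Nodup → ∀ f : (Fin d → Fin 4) → ℝ,
      l.foldl (fun acc j => stepA j acc) f = Matrix.mulVec (Pmat l.toFinset) f := by
  intro l
  induction l with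
  | nil => intro _ f; simp [pmat_empty]
  | cons j rest ih =>
    intro hnd f
    have hj : j ∉ rest := (List.nodup_cons.mp hnd).1
    have hrest : rest.Nodup := (List.nodup_cons.mp hnd).2
    have hfold : (j :: rest).foldl (fun acc j => stepA j acc) f
        = rest.foldl (fun acc j => stepA j acc) (stepA j f) := rfl
    rw [hfold, ih hrest (stepA j f), pmat_step _ j (by simpa using hj) f,
      List.toFinset_cons]

lemma foldl_stepA_eq_lmatD {d : ℕ} (f : (Fin d → Fin 4) → ℝ) :
    (List.finRange d).foldl (fun acc j => stepA j acc) f = Matrix.mulVec (LmatD d) f := by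
  rw [foldl_stepA_eq_pmat (List.finRange d) (List.nodup_finRange d) f]
  have : Pmat (List.finRange d).toFinset = LmatD d := by
    funext v w
    simp [Pmat, LmatD, List.toFinset_finRange]
  rw [this]

lemma stepA_contract {d : ℕ} (j : Fin d) {f g : (Fin d → Fin 4) → ℝ} {c : ℝ}
    (h : ∀ v, |f v - g v| ≤ c) : ∀ v, |stepA j f v - stepA j g v| ≤ c := by
  intro v
  have hc : 0 ≤ c := le_trans (abs_nonneg _) (h v)
  have hdiff : stepA j f v - stepA j g v
      = ∑ t, Lmat (v j) t * (f (Function.update v j t) - g (Function.update v j t)) := by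
    simp [stepA, mul_sub, Finset.sum_sub_distrib]
  rw [hdiff]
  calc |∑ t, Lmat (v j) t * (f (Function.update v j t) - g (Function.update v j t))|
      ≤ ∑ t, |Lmat (v j) t * (f (Function.update v j t) - g (Function.update v j t))| :=
        Finset.abs_sum_le_sum_abs _ _
    _ ≤ ∑ t, |Lmat (v j) t| * c := by
        refine Finset.sum_le_sum (fun t _ => ?_)
        rw [abs_mul]
        exact mul_le_mul_of_nonneg_left (h _) (abs_nonneg _)
    _ = (∑ t, |Lmat (v j) t|) * c := (Finset.sum_mul _ _ _).symm
    _ ≤ 1 * c := mul_le_mul_of_nonneg_right (lrow_abs _) hc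
    _ = c := one_mul c

lemma foldl_stepA_contract {d : ℕ} :
    ∀ (l : List (Fin d)) {f g : (Fin d → Fin 4) → ℝ} {c : ℝ},
      (∀ v, |f v - g v| ≤ c) →
      ∀ v, |l.foldl (fun acc j => stepA j acc) f v - l.foldl (fun acc j => stepA j acc) g v| ≤ c := by
  intro l
  induction l with
  | nil => intro f g c h v; exact h v
  | cons j rest ih => intro f g c h v; exact ih (stepA_contract j h) v

lemma applyAlong_err {d : ℕ} (j : Fin d) (z : (Fin d → Fin 4) → ℤ) (v : Fin d → Fin 4) :
    |((applyAlong j z v : ℤ) : ℝ) - stepA j (fun u => ((z u : ℤ) : ℝ)) v| ≤ 7/4 := by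
  have : stepA j (fun u => ((z u : ℤ) : ℝ)) v
      = Matrix.mulVec Lmat (fun t => (((fun t => z (Function.update v j t)) t : ℤ) : ℝ)) (v j) := by
    simp [stepA, Matrix.mulVec, dotProduct]
  rw [this]
  exact ltilde_err (fun t => z (Function.update v j t)) (v j)

lemma foldl_ltilde_err {d : ℕ} :
    ∀ (l : List (Fin d)) (z : (Fin d → Fin 4) → ℤ) (v : Fin d → Fin 4),
      |((l.foldl (fun acc j => applyAlong j acc) z v : ℤ) : ℝ)
        - l.foldl (fun acc j => stepA j acc) (fun u => ((z u : ℤ) : ℝ)) v| ≤ 7/4 * l.length := by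
  intro l
  induction l with
  | nil => intro z v; simp
  | cons j rest ih =>
    intro z v
    have h1 := ih (applyAlong j z) v
    have h2 : ∀ u, |(fun u => ((applyAlong j z u : ℤ) : ℝ)) u
        - stepA j (fun u => ((z u : ℤ) : ℝ)) u| ≤ 7/4 := fun u => applyAlong_err j z u
    have h3 := foldl_stepA_contract rest h2 v
    have hfold1 : (j :: rest).foldl (fun acc j => applyAlong j acc) z
        = rest.foldl (fun acc j => applyAlong j acc) (applyAlong j z) := rfl
    have hfold2 : (j :: rest).foldl (fun acc j => stepA j acc) (fun u => ((z u : ℤ) : ℝ))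
        = rest.foldl (fun acc j => stepA j acc) (stepA j (fun u => ((z u : ℤ) : ℝ))) := rfl
    rw [hfold1, hfold2]
    calc |((rest.foldl (fun acc j => applyAlong j acc) (applyAlong j z) v : ℤ) : ℝ)
          - rest.foldl (fun acc j => stepA j acc) (stepA j (fun u => ((z u : ℤ) : ℝ))) v|
        ≤ |((rest.foldl (fun acc j => applyAlong j acc) (applyAlong j z) v : ℤ) : ℝ)
            - rest.foldl (fun acc j => stepA j acc) (fun u => ((applyAlong j z u : ℤ) : ℝ)) v|
          + |rest.foldl (fun acc j => stepA j acc) (fun u => ((applyAlong j z u : ℤ) : ℝ)) v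
            - rest.foldl (fun acc j => stepA j acc) (stepA j (fun u => ((z u : ℤ) : ℝ))) v| := by
          exact abs_sub_le _ _ _
      _ ≤ 7/4 * rest.length + 7/4 := add_le_add h1 h3
      _ = 7/4 * (j :: rest).length := by simp; ring

lemma lmatD_row_abs {d : ℕ} (v : Fin d → Fin 4) :
    ∑ w : Fin d → Fin 4, |LmatD d v w| ≤ 1 := by
  have habs : ∀ w : Fin d → Fin 4, |LmatD d v w| = ∏ j, |Lmat (v j) (w j)| := by
    intro w; rw [LmatD, Finset.abs_prod]
  calc ∑ w : Fin d → Fin 4, |LmatD d v w|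
      = ∑ w : Fin d → Fin 4, ∏ j, |Lmat (v j) (w j)| := by
        exact Finset.sum_congr rfl (fun w _ => habs w)
    _ = ∏ j, ∑ t, |Lmat (v j) t| := by
        rw [Finset.prod_univ_sum]
        rw [← Fintype.piFinset_univ]
    _ ≤ 1 := by
        refine Finset.prod_le_one (fun j _ => ?_) (fun j _ => lrow_abs (v j))
        exact Finset.sum_nonneg (fun t _ => abs_nonneg _)

lemma lmatD_mulVec_bound {d : ℕ} {u : (Fin d → Fin 4) → ℝ} {c : ℝ} (hc : 0 ≤ c)
    (h : ∀ w, |u w| ≤ c) (v : Fin d → Fin 4) :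
    |Matrix.mulVec (LmatD d) u v| ≤ c := by
  calc |Matrix.mulVec (LmatD d) u v| = |∑ w, LmatD d v w * u w| := by
        simp [Matrix.mulVec, dotProduct]
    _ ≤ ∑ w, |LmatD d v w * u w| := Finset.abs_sum_le_sum_abs _ _
    _ ≤ ∑ w, |LmatD d v w| * c := by
        refine Finset.sum_le_sum (fun w _ => ?_)
        rw [abs_mul]
        exact mul_le_mul_of_nonneg_left (h w) (abs_nonneg _)
    _ = (∑ w, |LmatD d v w|) * c := (Finset.sum_mul _ _ _).symm
    _ ≤ 1 * c := mul_le_mul_of_nonneg_right (lmatD_row_abs v) hc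
    _ = c := one_mul c

/-- Two-sided bounds for sums of negabinary digits. -/
lemma neg2_aux : ∀ (m : ℕ) (S : Finset ℕ) (f : ℕ → ℤ),
    (∀ j ∈ S, j ≤ m) → (∀ j ∈ S, f j = 0 ∨ f j = 1) →
    (Even m → -(2^(m+1)) ≤ 3 * ∑ j ∈ S, f j * (-2:ℤ)^j ∧
      3 * ∑ j ∈ S, f j * (-2:ℤ)^j ≤ 2^(m+2)) ∧
    (¬ Even m → -(2^(m+2)) ≤ 3 * ∑ j ∈ S, f j * (-2:ℤ)^j ∧
      3 * ∑ j ∈ S, f j * (-2:ℤ)^j ≤ 2^(m+1)) := by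
  intro m
  induction m with
  | zero =>
    intro S f h1 h2
    have hS : S ⊆ {0} := by
      intro j hj
      simp [Nat.le_zero.mp (h1 j hj)]
    have hval : 0 ≤ ∑ j ∈ S, f j * (-2:ℤ)^j ∧ ∑ j ∈ S, f j * (-2:ℤ)^j ≤ 1 := by
      rcases Finset.subset_singleton_iff.mp hS with h | h
      · simp [h]
      · subst h
        rcases h2 0 (Finset.mem_singleton_self 0) with h | h <;> simp [h]
    constructor
    · intro _
      norm_num
      constructor <;> linarith [hval.1, hval.2]
    · intro h; exact absurd Even.zero h
  | succ m ih =>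
    intro S f h1 h2
    set S' := S.erase (m+1) with hS'
    have h1' : ∀ j ∈ S', j ≤ m := by
      intro j hj
      have := h1 j (Finset.mem_of_mem_erase hj)
      have := Finset.ne_of_mem_erase hj
      omega
    have h2' : ∀ j ∈ S', f j = 0 ∨ f j = 1 := fun j hj => h2 j (Finset.mem_of_mem_erase hj)
    obtain ⟨ihe, iho⟩ := ih S' f h1' h2'
    have hsplit : ∑ j ∈ S, f j * (-2:ℤ)^j
        = (∑ j ∈ S', f j * (-2:ℤ)^j) + (if (m+1) ∈ S then f (m+1) * (-2:ℤ)^(m+1) else 0) := by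
      by_cases hmem : (m+1) ∈ S
      · rw [if_pos hmem, hS', ← Finset.sum_erase_add S _ hmem]
      · rw [if_neg hmem, hS', Finset.erase_eq_of_notMem hmem, add_zero]
    have hp1 : (2:ℤ)^(m+2) = 2 * 2^(m+1) := by ring
    have hp2 : (2:ℤ)^(m+3) = 2 * 2^(m+2) := by ring
    have hppos : (0:ℤ) < 2^(m+1) := by positivity
    have hTcases : (if (m+1) ∈ S then f (m+1) * (-2:ℤ)^(m+1) else 0) = 0 ∨
        (if (m+1) ∈ S then f (m+1) * (-2:ℤ)^(m+1) else 0) = (-2:ℤ)^(m+1) := by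
      by_cases hmem : (m+1) ∈ S
      · rcases h2 _ hmem with h | h
        · left; simp [hmem, h]
        · right; simp [hmem, h]
      · left; simp [hmem]
    constructor
    · intro he1
      have hom : ¬ Even m := by rw [Nat.even_add_one] at he1; exact he1
      obtain ⟨l1, l2⟩ := iho hom
      have hneg : (-2:ℤ)^(m+1) = 2^(m+1) := Even.neg_pow he1 2
      rw [hsplit]
      rcases hTcases with hT | hT <;> rw [hT] <;>
        constructor <;> nlinarith [l1, l2, hppos, hp1, hp2, hneg]
    · intro ho1
      have hem : Even m := by
        rw [Nat.even_add_one] at ho1; exact not_not.mp ho1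
      obtain ⟨l1, l2⟩ := ihe hem
      have hneg : (-2:ℤ)^(m+1) = -(2^(m+1)) := Odd.neg_pow (by
        rcases Nat.even_or_odd (m+1) with h | h
        · exact absurd h (by rwa [Nat.even_add_one, not_not])
        · exact h) 2
      rw [hsplit]
      rcases hTcases with hT | hT <;> rw [hT] <;>
        constructor <;> nlinarith [l1, l2, hppos, hp1, hp2, hneg]

lemma neg2_sum_bound (m : ℕ) (S : Finset ℕ) (f : ℕ → ℤ)
    (h1 : ∀ j ∈ S, j ≤ m) (h2 : ∀ j ∈ S, f j = 0 ∨ f j = 1) :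
    3 * |∑ j ∈ S, f j * (-2:ℤ)^j| ≤ 2^(m+2) := by
  obtain ⟨he, ho⟩ := neg2_aux m S f h1 h2
  have hp : (2:ℤ)^(m+1) ≤ 2^(m+2) := by
    have : (2:ℤ)^(m+2) = 2 * 2^(m+1) := by ring
    have h0 : (0:ℤ) < 2^(m+1) := by positivity
    linarith
  rcases Nat.even_or_odd m with h | h
  · obtain ⟨l1, l2⟩ := he h
    rcases abs_cases (∑ j ∈ S, f j * (-2:ℤ)^j) with ⟨h1, _⟩ | ⟨h1, _⟩ <;> rw [h1] <;> linarith
  · obtain ⟨l1, l2⟩ := ho (by rwa [Nat.not_even_iff_odd])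
    rcases abs_cases (∑ j ∈ S, f j * (-2:ℤ)^j) with ⟨h1, _⟩ | ⟨h1, _⟩ <;> rw [h1] <;> linarith

set_option maxHeartbeats 2000000 in
/-- Error of the lossy ZFP fixed-precision compression pipeline against the exact one:
for `x ∈ ℝ^{4^d}`, `x ≠ 0`, with `k`-bit floating-point components,
`e_max = ⌊log₂‖x‖_∞⌋`, `ℓ = e_max − q + 1`, Step 2 truncation `z`, Step 3 lossy
transform `w = 𝐿̃_d(z)`, and Step 8 negabinary truncation `ŵ`, one has
`‖ŵ − L_d·(2^{−ℓ}·x)‖_∞ ≤ 2^{−ℓ}·((8/3)·ε_β + ε_q·(1+(8/3)·ε_β)·(k_L·(1+ε_q)+1))·‖x‖_∞`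
with `ε_m = 2^{1−m}` and `k_L = (7/4)·(2^d − 1)`. -/
theorem zfp_compression_error (d k q β : ℕ) (hd : 1 ≤ d)
    (x : (Fin d → Fin 4) → ℝ) (hx : x ≠ 0)
    (hfloat : ∀ v, ∃ (σ : ℝ) (m : ℕ) (t : ℤ),
      (σ = 1 ∨ σ = -1) ∧ m < 2 ^ k ∧ x v = σ * (m : ℝ) * (2 : ℝ) ^ t)
    (emax ℓ : ℤ) (hemax : emax = ⌊Real.logb 2 ‖x‖⌋) (hℓ : ℓ = emax - (q : ℤ) + 1)
    (z : (Fin d → Fin 4) → ℤ)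
    (hz : ∀ v, z v = (if 0 ≤ x v then 1 else -1) * ⌊(2 : ℝ) ^ (-ℓ) * |x v|⌋)
    (w : (Fin d → Fin 4) → ℤ) (hw : w = LtildeD z)
    (D : (Fin d → Fin 4) → (ℕ →₀ ℤ))
    (hD01 : ∀ v j, D v j = 0 ∨ D v j = 1)
    (hDrep : ∀ v, w v = ∑ j ∈ (D v).support, D v j * (-2 : ℤ) ^ j)
    (what : (Fin d → Fin 4) → ℤ)
    (hwhat : ∀ v, what v =
      ∑ j ∈ (D v).support.filter (fun j : ℕ => (q : ℤ) + 1 - (β : ℤ) < (j : ℤ)),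
        D v j * (-2 : ℤ) ^ j) :
    ‖(fun v => (what v : ℝ)) - (LmatD d).mulVec (fun v => (2 : ℝ) ^ (-ℓ) * x v)‖ ≤
      2 ^ (-ℓ) * ((8 / 3) * 2 ^ (1 - (β : ℤ)) +
        2 ^ (1 - (q : ℤ)) * (1 + (8 / 3) * 2 ^ (1 - (β : ℤ))) *
          ((7 / 4) * ((2 : ℝ) ^ d - 1) * (1 + 2 ^ (1 - (q : ℤ))) + 1)) * ‖x‖ := by
  -- basic positivity facts
  have hxpos : 0 < ‖x‖ := by
    rw [norm_pos_iff]; exact hx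
  have h2pos : (0:ℝ) < 2 ^ (-ℓ) := by positivity
  -- ‖x‖ ≥ 2 ^ emax
  have hlogle : (emax : ℝ) ≤ Real.logb 2 ‖x‖ := by
    rw [hemax]; exact_mod_cast Int.floor_le _
  have hlb : (2:ℝ) ^ emax ≤ ‖x‖ := by
    have h1 : (2:ℝ) ^ (emax : ℝ) ≤ (2:ℝ) ^ (Real.logb 2 ‖x‖) :=
      Real.rpow_le_rpow_of_exponent_le one_le_two hlogle
    have h2 : (2:ℝ) ^ (Real.logb 2 ‖x‖) = ‖x‖ :=
      Real.rpow_logb (by norm_num) (by norm_num) hxpos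
    calc (2:ℝ) ^ emax = (2:ℝ) ^ (emax : ℝ) := by
          rw [← Real.rpow_intCast]
      _ ≤ ‖x‖ := h2 ▸ h1
  -- c := 2^(-ℓ)‖x‖ ≥ 2^(q-1)
  have hc : (2:ℝ) ^ ((q:ℤ) - 1) ≤ 2 ^ (-ℓ) * ‖x‖ := by
    have h1 : (2:ℝ) ^ (-ℓ) * (2:ℝ) ^ emax ≤ 2 ^ (-ℓ) * ‖x‖ :=
      mul_le_mul_of_nonneg_left hlb (le_of_lt h2pos)
    have h2 : (2:ℝ) ^ (-ℓ) * (2:ℝ) ^ emax = (2:ℝ) ^ ((q:ℤ) - 1) := by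
      rw [← zpow_add₀ (by norm_num : (2:ℝ) ≠ 0)]
      congr 1
      omega
    linarith [h2 ▸ h1]
  -- Step 2 truncation error
  have hzx : ∀ v, |((z v : ℤ) : ℝ) - 2 ^ (-ℓ) * x v| ≤ 1 := by
    intro v
    rw [hz v]
    rcases le_or_gt 0 (x v) with hv | hv
    · rw [if_pos hv, abs_of_nonneg hv]
      push_cast
      have h1 := Int.floor_le ((2:ℝ) ^ (-ℓ) * x v)
      have h2 := Int.lt_floor_add_one ((2:ℝ) ^ (-ℓ) * x v)
      rw [abs_le, one_mul]; constructor <;> linarith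
    · rw [if_neg (not_le.mpr hv), abs_of_neg hv]
      have h1 := Int.floor_le ((2:ℝ) ^ (-ℓ) * (-(x v)))
      have h2 := Int.lt_floor_add_one ((2:ℝ) ^ (-ℓ) * (-(x v)))
      push_cast
      rw [abs_le]; constructor <;> nlinarith
  -- Step 8 truncation error
  have htr : ∀ v, |((what v : ℤ) : ℝ) - ((w v : ℤ) : ℝ)|
      ≤ (1/3) * 2 ^ ((q:ℤ) + 3 - (β:ℤ)) := by
    intro v
    have hsplit := Finset.sum_filter_add_sum_filter_not (D v).support
      (fun j : ℕ => (q : ℤ) + 1 - (β : ℤ) < (j : ℤ)) (fun j => D v j * (-2 : ℤ) ^ j)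
    have hdiff : w v - what v
        = ∑ j ∈ (D v).support.filter (fun j : ℕ => ¬ ((q : ℤ) + 1 - (β : ℤ) < (j : ℤ))),
            D v j * (-2 : ℤ) ^ j := by
      rw [hDrep v, hwhat v, ← hsplit]; ring
    by_cases hqb : 0 ≤ (q:ℤ) + 1 - (β:ℤ)
    · set m := ((q:ℤ) + 1 - (β:ℤ)).toNat with hm
      have hmz : (m : ℤ) = (q:ℤ) + 1 - (β:ℤ) := Int.toNat_of_nonneg hqb
      have hb := neg2_sum_bound m
        ((D v).support.filter (fun j : ℕ => ¬ ((q : ℤ) + 1 - (β : ℤ) < (j : ℤ))))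
        (fun j => D v j)
        (by
          intro j hj
          have := (Finset.mem_filter.mp hj).2
          omega)
        (fun j hj => hD01 v j)
      rw [← hdiff] at hb
      have hbr : 3 * |((w v : ℤ) : ℝ) - ((what v : ℤ) : ℝ)| ≤ (2:ℝ)^(m+2) := by
        have h' : ((3 * |w v - what v| : ℤ) : ℝ) ≤ ((2^(m+2) : ℤ) : ℝ) := by exact_mod_cast hb
        push_cast at h'
        linarith [h']
      have hpow : (2:ℝ)^(m+2) = 2 ^ ((q:ℤ) + 3 - (β:ℤ)) := by
        rw [← zpow_natCast (2:ℝ) (m+2)]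
        congr 1
        push_cast
        omega
      rw [abs_sub_comm]
      rw [hpow] at hbr
      linarith
    · have hempty : ((D v).support.filter
          (fun j : ℕ => ¬ ((q : ℤ) + 1 - (β : ℤ) < (j : ℤ)))) = ∅ := by
        rw [Finset.filter_eq_empty_iff]
        intro j _
        simp only [not_not]
        omega
      have : w v = what v := by
        have := hdiff
        rw [hempty, Finset.sum_empty] at this
        omega
      rw [this, sub_self, abs_zero]
      positivity
  -- Step 3 transform error
  set zr : (Fin d → Fin 4) → ℝ := fun u => ((z u : ℤ) : ℝ) with hzr
  have hwe : ∀ v, |((w v : ℤ) : ℝ)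
      - (List.finRange d).foldl (fun acc j => stepA j acc) zr v| ≤ 7/4 * d := by
    intro v
    rw [hw]
    have := foldl_ltilde_err (List.finRange d) z v
    simpa [LtildeD, List.length_finRange] using this
  have hEmv : (List.finRange d).foldl (fun acc j => stepA j acc) zr
      = Matrix.mulVec (LmatD d) zr := foldl_stepA_eq_lmatD zr
  -- linear part error
  have hlin : ∀ v, |Matrix.mulVec (LmatD d) zr v
      - Matrix.mulVec (LmatD d) (fun u => 2 ^ (-ℓ) * x u) v| ≤ 1 := by
    intro v
    have hsub : Matrix.mulVec (LmatD d) zr v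
        - Matrix.mulVec (LmatD d) (fun u => 2 ^ (-ℓ) * x u) v
        = Matrix.mulVec (LmatD d) (fun u => zr u - 2 ^ (-ℓ) * x u) v := by
      simp [Matrix.mulVec, dotProduct, mul_sub, Finset.sum_sub_distrib]
    rw [hsub]
    exact lmatD_mulVec_bound zero_le_one (fun u => hzx u) v
  -- componentwise total error
  have hcomp : ∀ v, |((what v : ℤ) : ℝ) - Matrix.mulVec (LmatD d) (fun u => 2 ^ (-ℓ) * x u) v|
      ≤ (1/3) * 2 ^ ((q:ℤ) + 3 - (β:ℤ)) + 7/4 * d + 1 := by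
    intro v
    have t1 := htr v
    have t2 := hwe v
    have t3 := hlin v
    rw [hEmv] at t2
    calc |((what v : ℤ) : ℝ) - Matrix.mulVec (LmatD d) (fun u => 2 ^ (-ℓ) * x u) v|
        ≤ |((what v : ℤ) : ℝ) - ((w v : ℤ) : ℝ)|
          + |((w v : ℤ) : ℝ) - Matrix.mulVec (LmatD d) zr v|
          + |Matrix.mulVec (LmatD d) zr v
            - Matrix.mulVec (LmatD d) (fun u => 2 ^ (-ℓ) * x u) v| := by
          have := abs_sub_le (((what v : ℤ) : ℝ)) (Matrix.mulVec (LmatD d) zr v)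
            (Matrix.mulVec (LmatD d) (fun u => 2 ^ (-ℓ) * x u) v)
          have h2 := abs_sub_le (((what v : ℤ) : ℝ)) (((w v : ℤ) : ℝ))
            (Matrix.mulVec (LmatD d) zr v)
          linarith
      _ ≤ (1/3) * 2 ^ ((q:ℤ) + 3 - (β:ℤ)) + 7/4 * d + 1 := by
          linarith
  -- final arithmetic
  set A := (8/3 : ℝ) * 2 ^ (1 - (β:ℤ)) with hA
  set Bq := (2:ℝ) ^ (1 - (q:ℤ)) with hBq
  set K := (7/4 : ℝ) * ((2:ℝ)^d - 1) with hK
  have hApos : 0 < A := by rw [hA]; positivity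
  have hBqpos : 0 < Bq := by rw [hBq]; positivity
  have h2d : (1:ℝ) ≤ (2:ℝ)^d := one_le_pow₀ (by norm_num)
  have hKpos : 0 ≤ K := by rw [hK]; nlinarith
  set c := (2:ℝ) ^ (-ℓ) * ‖x‖ with hcdef
  have hcpos : 0 < c := by positivity
  have hBqc : 1 ≤ Bq * c := by
    have h1 : Bq * (2:ℝ)^((q:ℤ)-1) ≤ Bq * c := mul_le_mul_of_nonneg_left hc (le_of_lt hBqpos)
    have h2 : Bq * (2:ℝ)^((q:ℤ)-1) = 1 := by
      rw [hBq, ← zpow_add₀ (by norm_num : (2:ℝ) ≠ 0)]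
      norm_num
    linarith
  have hAc : (1/3) * 2 ^ ((q:ℤ) + 3 - (β:ℤ)) ≤ A * c := by
    have h1 : A * (2:ℝ)^((q:ℤ)-1) ≤ A * c := mul_le_mul_of_nonneg_left hc (le_of_lt hApos)
    have h2 : A * (2:ℝ)^((q:ℤ)-1) = (1/3) * 2 ^ ((q:ℤ) + 3 - (β:ℤ)) := by
      rw [hA]
      rw [show ((q:ℤ) + 3 - (β:ℤ)) = (1 - (β:ℤ)) + ((q:ℤ) - 1) + 3 by ring]
      rw [zpow_add₀ (by norm_num : (2:ℝ) ≠ 0), zpow_add₀ (by norm_num : (2:ℝ) ≠ 0)]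
      norm_num
      ring
    linarith
  have hdK : (7/4 : ℝ) * d + 1 ≤ K + 1 := by
    have : (d:ℝ) + 1 ≤ (2:ℝ)^d := by
      have := (Nat.lt_two_pow_self (n := d))
      have h2 : (d:ℝ) < (2:ℝ)^d := by exact_mod_cast this
      have h3 : ((d:ℕ):ℝ) + 1 ≤ (2:ℝ)^d := by
        have : ((d+1 : ℕ):ℝ) ≤ ((2^d : ℕ):ℝ) := by exact_mod_cast (Nat.lt_two_pow_self (n := d))
        push_cast at this
        exact this
      exact h3
    rw [hK]; nlinarith
  have hsecond : K + 1 ≤ Bq * (1 + A) * (K * (1 + Bq) + 1) * c := by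
    have s1 : K + 1 ≤ K * (1 + Bq) + 1 := by nlinarith
    have s2 : K * (1 + Bq) + 1 ≤ (1 + A) * (K * (1 + Bq) + 1) := by nlinarith
    have s3 : (1 + A) * (K * (1 + Bq) + 1) ≤ (1 + A) * (K * (1 + Bq) + 1) * (Bq * c) := by
      have hnn : 0 ≤ (1 + A) * (K * (1 + Bq) + 1) := by nlinarith
      exact le_mul_of_one_le_right hnn hBqc
    calc K + 1 ≤ (1 + A) * (K * (1 + Bq) + 1) := le_trans s1 s2
      _ ≤ (1 + A) * (K * (1 + Bq) + 1) * (Bq * c) := s3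
      _ = Bq * (1 + A) * (K * (1 + Bq) + 1) * c := by ring
  have hbound : (1/3) * 2 ^ ((q:ℤ) + 3 - (β:ℤ)) + 7/4 * d + 1
      ≤ 2 ^ (-ℓ) * (A + Bq * (1 + A) * (K * (1 + Bq) + 1)) * ‖x‖ := by
    have hre : (2:ℝ) ^ (-ℓ) * (A + Bq * (1 + A) * (K * (1 + Bq) + 1)) * ‖x‖
        = A * c + Bq * (1 + A) * (K * (1 + Bq) + 1) * c := by
      rw [hcdef]; ring
    rw [hre]
    linarith
  -- conclude via the sup norm
  have hBnn : (0:ℝ) ≤ 2 ^ (-ℓ) * (A + Bq * (1 + A) * (K * (1 + Bq) + 1)) * ‖x‖ := by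
    have : 0 < A + Bq * (1 + A) * (K * (1 + Bq) + 1) := by nlinarith
    positivity
  have hgoal : ((8 / 3 : ℝ) * 2 ^ (1 - (β : ℤ)) +
        2 ^ (1 - (q : ℤ)) * (1 + (8 / 3) * 2 ^ (1 - (β : ℤ))) *
          ((7 / 4) * ((2 : ℝ) ^ d - 1) * (1 + 2 ^ (1 - (q : ℤ))) + 1))
      = (A + Bq * (1 + A) * (K * (1 + Bq) + 1)) := by rw [hA, hBq, hK]
  rw [hgoal, pi_norm_le_iff_of_nonneg hBnn]
  intro v
  rw [Pi.sub_apply, Real.norm_eq_abs]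
  exact le_trans (hcomp v) hbound
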